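/- Every biconnected chordal graph is locally connected. -/

import Mathlib

namespace EVC

open SimpleGraph

variable {V : Type*}

/-- `S` is a vertex cover of `G`. -/
def IsVC (G : SimpleGraph V) (S : Set V) : Prop :=
  ∀ ⦃u v : V⦄, G.Adj u v → u ∈ S ∨ v ∈ S

/-- The minimum vertex cover number of `G`. -/
noncomputable def mvc (G : SimpleGraph V) : ℕ :=
  sInf {k | ∃ S : Set V, IsVC G S ∧ S.ncard = k}

/-- The minimum size of a vertex cover of `G` containing all vertices of `U`. -/
noncomputable def mvcOn (G : SimpleGraph V) (U : Set V) : ℕ :=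
  sInf {k | ∃ S : Set V, IsVC G S ∧ U ⊆ S ∧ S.ncard = k}

/-- Configuration `S'` is obtained from configuration `S` by a legal move of the guards
defending an attack on the edge `uv`: each guard stays or moves to an adjacent vertex
(at most one guard per vertex), and some guard moves across the attacked edge `uv`. -/
def Defends (G : SimpleGraph V) (S S' : Set V) (u v : V) : Prop :=
  ∃ f : V → V, Set.BijOn f S S' ∧ (∀ w ∈ S, f w = w ∨ G.Adj w (f w)) ∧
    ((u ∈ S ∧ f u = v) ∨ (v ∈ S ∧ f v = u))

/-- `C` is an eternal vertex cover class of `G` with `k` guards, each configuration being a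
vertex cover of size `k` containing `U`: from each configuration, every attack on an edge
can be defended by a legal move to another configuration in `C`. -/
def IsEvcClassOn (G : SimpleGraph V) (U : Set V) (k : ℕ) (C : Set (Set V)) : Prop :=
  C.Nonempty ∧ (∀ S ∈ C, IsVC G S ∧ U ⊆ S ∧ S.ncard = k) ∧
    ∀ S ∈ C, ∀ u v : V, G.Adj u v → ∃ S' ∈ C, Defends G S S' u v

/-- An eternal vertex cover class with no constraint on occupied vertices. -/
def IsEvcClass (G : SimpleGraph V) (k : ℕ) (C : Set (Set V)) : Prop :=
  IsEvcClassOn G ∅ k C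

/-- `evc_U(G)` : the minimum `k` admitting an eternal vertex cover class all of whose
configurations contain `U`. -/
noncomputable def evcOn (G : SimpleGraph V) (U : Set V) : ℕ :=
  sInf {k | ∃ C : Set (Set V), IsEvcClassOn G U k C}

/-- The eternal vertex cover number of `G`. -/
noncomputable def evc (G : SimpleGraph V) : ℕ := evcOn G ∅

/-- `x` is a cut vertex of the connected graph `G`. -/
def IsCutVertex (G : SimpleGraph V) (x : V) : Prop :=
  G.Connected ∧ ¬ (G.induce {v : V | v ≠ x}).Connected

/-- The set of cut vertices of `G`. -/
def cutVertices (G : SimpleGraph V) : Set V := {x | IsCutVertex G x}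

/-- `G` is locally connected: every open neighborhood induces a connected subgraph. -/
def LocallyConnected (G : SimpleGraph V) : Prop :=
  ∀ v : V, (G.induce (G.neighborSet v)).Connected

end EVC

open EVC SimpleGraph

/-- `G` is chordal: every cycle of length at least 4 has a chord. -/
def IsChordal {V : Type*} (G : SimpleGraph V) : Prop :=
  ∀ (u : V) (w : G.Walk u u), w.IsCycle → 4 ≤ w.length →
    ∃ a ∈ w.support, ∃ b ∈ w.support, G.Adj a b ∧ s(a, b) ∉ w.edges

/-- `G` is biconnected: connected, at least 3 vertices, no cut vertex. -/
def IsBiconnected {V : Type*} (G : SimpleGraph V) : Prop :=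
  G.Connected ∧ 3 ≤ Nat.card V ∧ ∀ x : V, ¬ IsCutVertex G x

lemma chord_or_shorter {W : Type*} [DecidableEq W] {H : SimpleGraph W} :
    ∀ {a b : W} (p : H.Walk a b) {x y : W}, x ∈ p.support → y ∈ p.support →
      H.Adj x y → s(x, y) ∈ p.edges ∨ ∃ q : H.Walk a b, q.length < p.length := by
  intro a b p
  induction p with
  | nil =>
    intro x y hx hy hadj
    simp only [Walk.support_nil, List.mem_singleton] at hx hy
    exact absurd (hx.trans hy.symm) hadj.ne
  | @cons a a₁ b h p ih =>
    intro x y hx hy hadj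
    simp only [Walk.support_cons, List.mem_cons] at hx hy
    rcases hx with rfl | hx
    · rcases hy with rfl | hy
      · exact absurd rfl hadj.ne
      · by_cases ht : (p.takeUntil y hy).length = 0
        · left
          have : a₁ = y := Walk.eq_of_length_eq_zero ht
          subst this
          simp [Walk.edges_cons]
        · right
          refine ⟨Walk.cons hadj (p.dropUntil y hy), ?_⟩
          have hsum : (p.takeUntil y hy).length + (p.dropUntil y hy).length = p.length := by
            have := congrArg Walk.length (p.take_spec hy)
            rwa [Walk.length_append] at this
          simp only [Walk.length_cons]
          omega
    · rcases hy with rfl | hy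
      · by_cases ht : (p.takeUntil x hx).length = 0
        · left
          have : a₁ = x := Walk.eq_of_length_eq_zero ht
          subst this
          rw [Sym2.eq_swap]
          simp [Walk.edges_cons]
        · right
          refine ⟨Walk.cons hadj.symm (p.dropUntil x hx), ?_⟩
          have hsum : (p.takeUntil x hx).length + (p.dropUntil x hx).length = p.length := by
            have := congrArg Walk.length (p.take_spec hx)
            rwa [Walk.length_append] at this
          simp only [Walk.length_cons]
          omega
      · rcases ih hx hy hadj with he | ⟨q, hq⟩
        · left; simp [Walk.edges_cons, he]
        · right
          exact ⟨Walk.cons h q, by simp only [Walk.length_cons]; omega⟩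

lemma adj_of_length_eq_one {W : Type*} {H : SimpleGraph W} {u w : W} :
    ∀ {p : H.Walk u w}, p.length = 1 → H.Adj u w := by
  intro p
  cases p with
  | nil => simp
  | cons h q =>
    intro hl
    simp only [Walk.length_cons, Nat.add_eq_right] at hl
    have := Walk.eq_of_length_eq_zero hl
    subst this
    exact h


/-- Every biconnected chordal graph is locally connected. -/
theorem locallyConnected_of_biconnected_chordal {V : Type*} [Finite V]
    (G : SimpleGraph V) (hbc : IsBiconnected G) (hch : IsChordal G) :
    LocallyConnected G := by
  obtain ⟨hconn, hcard, hcut⟩ := hbc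
  intro v
  classical
  set Nv := G.neighborSet v with hNvdef
  have hG' : (G.induce {w : V | w ≠ v}).Connected := by
    by_contra h
    exact hcut v ⟨hconn, h⟩
  have hNvne : Nonempty ↥Nv := by
    have : Nontrivial V := by
      have hf := Fintype.ofFinite V
      rw [Nat.card_eq_fintype_card] at hcard
      exact Fintype.one_lt_card_iff_nontrivial.mp (by omega)
    obtain ⟨w, hw⟩ := exists_ne v
    obtain ⟨p⟩ := hconn.preconnected v w
    cases p with
    | nil => exact absurd rfl hw
    | cons h _ => exact ⟨⟨_, h⟩⟩
  rw [connected_iff]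
  refine ⟨?_, hNvne⟩
  intro a0 b0
  by_contra hr0
  -- the embedding hom
  let e : ↥Nv → ↥{w : V | w ≠ v} := fun a => ⟨a.1, (a.2 : G.Adj v a.1).ne'⟩
  let ι : G.induce {w : V | w ≠ v} →g G := ⟨Function.Embedding.subtype _, fun h => h⟩
  set S : Set ℕ := {n | ∃ a b : ↥Nv, ¬(G.induce Nv).Reachable a b ∧
    ∃ p : (G.induce {w : V | w ≠ v}).Walk (e a) (e b), p.length = n} with hSdef
  have hSne : S.Nonempty := by
    obtain ⟨p0⟩ := hG'.preconnected (e a0) (e b0)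
    exact ⟨p0.length, a0, b0, hr0, p0, rfl⟩
  set n₀ := sInf S with hn₀
  obtain ⟨a, b, hr, p, hp⟩ := Nat.sInf_mem hSne
  have hpbmem : p.bypass.length ∈ S := ⟨a, b, hr, p.bypass, rfl⟩
  have hl : p.bypass.length = n₀ :=
    le_antisymm (le_trans p.length_bypass_le (le_of_eq hp)) (Nat.sInf_le hpbmem)
  set pb := p.bypass with hpbdef
  have hpbpath : pb.IsPath := p.bypass_isPath
  -- n₀ ≥ 2
  have hn2 : 2 ≤ n₀ := by
    by_contra hlt
    interval_cases n₀
    · have heq : e a = e b := Walk.eq_of_length_eq_zero hl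
      have hv' := Subtype.ext_iff.mp heq
      have : a = b := Subtype.ext hv'
      exact hr (this ▸ Reachable.refl a)
    · have hadj : (G.induce {w : V | w ≠ v}).Adj (e a) (e b) := adj_of_length_eq_one hl
      have : (G.induce Nv).Adj a b := hadj
      exact hr this.reachable
  -- construct the cycle
  have hval : Function.Injective (Subtype.val : ↥{w : V | w ≠ v} → V) := Subtype.val_injective
  let pm : G.Walk (a : V) (b : V) := pb.map ι
  have hpmsup : pm.support = pb.support.map Subtype.val := by
    show (pb.map ι).support = _
    rw [Walk.support_map]; rfl
  have hvpm : v ∉ pm.support := by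
    rw [hpmsup]
    rintro hmem
    obtain ⟨x', _, hx'⟩ := List.mem_map.mp hmem
    exact x'.2 hx'
  have hpmpath : pm.IsPath := Walk.map_isPath_of_injective hval hpbpath
  have hadjva : G.Adj v (a : V) := a.2
  have hadjbv : G.Adj (b : V) v := (b.2 : G.Adj v b.1).symm
  let q : G.Walk (a : V) v := pm.concat hadjbv
  have hqpath : q.IsPath := by
    rw [Walk.isPath_def, Walk.support_concat]
    have := List.Nodup.concat hvpm hpmpath.support_nodup
    rwa [List.concat_eq_append] at this
  have hab : (a : V) ≠ (b : V) := by
    intro h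
    exact hr ((Subtype.ext h : a = b) ▸ Reachable.refl a)
  have hnotedge : s(v, (a : V)) ∉ q.edges := by
    rw [Walk.edges_concat, List.concat_eq_append, List.mem_append, List.mem_singleton]
    rintro (h | h)
    · exact hvpm (pm.fst_mem_support_of_mem_edges h)
    · rw [Sym2.eq_iff] at h
      rcases h with ⟨h1, h2⟩ | ⟨_, h2⟩
      · exact hadjva.ne' h2
      · exact hab h2
  let c : G.Walk v v := Walk.cons hadjva q
  have hc : c.IsCycle := (Walk.cons_isCycle_iff q hadjva).mpr ⟨hqpath, hnotedge⟩
  have hpmlen : pm.length = n₀ := by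
    show (pb.map ι).length = n₀
    rw [Walk.length_map]; exact hl
  have hclen : 4 ≤ c.length := by
    have hce : c.length = pm.length + 2 := by
      simp [c, q, Walk.length_cons, Walk.length_concat]
    omega
  obtain ⟨x, hx, y, hy, hxy, hchne⟩ := hch v c hc hclen
  have hcedges : c.edges = s(v, (a : V)) :: (pm.edges ++ [s((b : V), v)]) := by
    show (Walk.cons hadjva q).edges = _
    rw [Walk.edges_cons]
    congr 1
    rw [Walk.edges_concat, List.concat_eq_append]
  have hsupp : ∀ z, z ∈ c.support → z = v ∨ z ∈ pm.support := by
    intro z hz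
    have : c.support = v :: (pm.support ++ [v]) := by
      show (Walk.cons hadjva q).support = _
      rw [Walk.support_cons]
      congr 1
      rw [Walk.support_concat]
    rw [this] at hz
    simp only [List.mem_cons, List.mem_append, List.mem_singleton] at hz
    tauto
  -- key case : chord from v to an interior vertex
  have hcase : ∀ z : V, z ∈ pm.support → G.Adj v z → s(v, z) ∈ c.edges := by
    intro z hz hvz
    rw [hpmsup] at hz
    obtain ⟨z', hz'sup, hz'val⟩ := List.mem_map.mp hz
    by_cases hza : z = (a : V)
    · rw [hcedges, hza]; exact List.mem_cons_self
    by_cases hzb : z = (b : V)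
    · rw [hcedges, hzb]
      have : s(v, (b : V)) = s((b : V), v) := Sym2.eq_swap
      rw [this]
      simp
    exfalso
    have hzNv : z ∈ Nv := hvz
    set ym : ↥Nv := ⟨z, hzNv⟩ with hymdef
    have hcast : z' = e ym := Subtype.ext hz'val
    have hsum : (pb.takeUntil z' hz'sup).length + (pb.dropUntil z' hz'sup).length = n₀ := by
      have := congrArg Walk.length (pb.take_spec hz'sup)
      rw [Walk.length_append] at this
      rw [this]; exact hl
    have h1 : (pb.takeUntil z' hz'sup).length ≠ 0 := by
      intro h0
      have : e a = z' := Walk.eq_of_length_eq_zero h0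
      exact hza (hz'val ▸ congrArg Subtype.val this.symm)
    have h2 : (pb.dropUntil z' hz'sup).length ≠ 0 := by
      intro h0
      have : z' = e b := Walk.eq_of_length_eq_zero h0
      exact hzb (hz'val ▸ congrArg Subtype.val this)
    by_cases hray : (G.induce Nv).Reachable a ym
    · have hnr : ¬ (G.induce Nv).Reachable ym b := fun h => hr (hray.trans h)
      have : n₀ ≤ ((pb.dropUntil z' hz'sup).copy hcast rfl).length :=
        Nat.sInf_le ⟨ym, b, hnr, _, rfl⟩
      rw [Walk.length_copy] at this
      omega
    · have : n₀ ≤ ((pb.takeUntil z' hz'sup).copy rfl hcast).length :=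
        Nat.sInf_le ⟨a, ym, hray, _, rfl⟩
      rw [Walk.length_copy] at this
      omega
  rcases hsupp x hx with rfl | hx'
  · rcases hsupp y hy with rfl | hy'
    · exact hxy.ne rfl
    · exact hchne (hcase y hy' hxy)
  · rcases hsupp y hy with rfl | hy'
    · refine hchne ?_
      rw [Sym2.eq_swap]
      exact hcase x hx' hxy.symm
    · -- both interior : shortcut or chord along the path
      rw [hpmsup] at hx' hy'
      obtain ⟨x', hx'sup, hx'val⟩ := List.mem_map.mp hx'
      obtain ⟨y', hy'sup, hy'val⟩ := List.mem_map.mp hy'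
      have hadj' : (G.induce {w : V | w ≠ v}).Adj x' y' := by
        show G.Adj (x' : V) (y' : V)
        rw [hx'val, hy'val]; exact hxy
      rcases chord_or_shorter pb hx'sup hy'sup hadj' with he | ⟨q', hq'⟩
      · refine hchne ?_
        rw [hcedges]
        have : s(x, y) ∈ pm.edges := by
          show s(x, y) ∈ (pb.map ι).edges
          rw [Walk.edges_map, List.mem_map]
          refine ⟨s(x', y'), he, ?_⟩
          rw [Sym2.map_pair_eq]
          show s((x' : V), (y' : V)) = s(x, y)
          rw [hx'val, hy'val]
        simp [this]
      · have : n₀ ≤ q'.length := Nat.sInf_le ⟨a, b, hr, q', rfl⟩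
        omega
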